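/- Let S ⊆ ℕ^d be a Frobenius generalized numerical semigroup with Frobenius gap F = F(S), and let T(S) = {x ∈ ℕ^d | F − x ∈ (ℤ^d \ S) ∪ {0}}, where the difference F − x is taken in ℤ^d and S is regarded as a subset of ℤ^d. Then S is almost symmetric, i.e. t(S) = 2·g(S) + 1 − ‖F‖, if and only if T(S) is a generalized numerical semigroup. -/

import Mathlib

open Finset

/-- A generalized numerical semigroup (GNS) in `ℕ^d`: contains `0`, is closed under
componentwise addition, and has finite complement. -/
def IsGNS {d : ℕ} (S : Set (Fin d → ℕ)) : Prop :=
  (0 : Fin d → ℕ) ∈ S ∧ (∀ a ∈ S, ∀ b ∈ S, a + b ∈ S) ∧ Sᶜ.Finite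

/-- A relaxed monomial order on `ℕ^d`: a (strict) total order `r` such that
`r v w → r v (w + u)` and `0` is below every nonzero element. -/
def IsRMO {d : ℕ} (r : (Fin d → ℕ) → (Fin d → ℕ) → Prop) : Prop :=
  IsStrictTotalOrder (Fin d → ℕ) r ∧
  (∀ v w u : Fin d → ℕ, r v w → r v (w + u)) ∧
  (∀ v : Fin d → ℕ, v ≠ 0 → r 0 v)

/-- `F` is the Frobenius gap of `S` with respect to the order `r`, i.e. the
`r`-maximum of the gap set `ℕ^d \ S`. -/
def IsFrobGapWrt {d : ℕ} (S : Set (Fin d → ℕ))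
    (r : (Fin d → ℕ) → (Fin d → ℕ) → Prop) (F : Fin d → ℕ) : Prop :=
  F ∉ S ∧ ∀ x, x ∉ S → x ≠ F → r x F

/-- `F` is a Frobenius allowable gap of `S`: it is the Frobenius gap with respect to
some relaxed monomial order. -/
def FrobAllowable {d : ℕ} (S : Set (Fin d → ℕ)) (F : Fin d → ℕ) : Prop :=
  ∃ r, IsRMO r ∧ IsFrobGapWrt S r F

/-- `F` is a maximal gap of `S` with respect to the natural (componentwise)
partial order on `ℕ^d`. -/
def MaxGap {d : ℕ} (S : Set (Fin d → ℕ)) (F : Fin d → ℕ) : Prop :=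
  F ∉ S ∧ ∀ x, x ∉ S → F ≤ x → x = F

/-- The set of Frobenius allowable gaps of `S`, i.e. the maximal elements of the gap
set under the natural partial order. -/
def FA {d : ℕ} (S : Set (Fin d → ℕ)) : Set (Fin d → ℕ) := {F | MaxGap S F}

/-- The set of pseudo-Frobenius gaps of `S`. -/
def PF {d : ℕ} (S : Set (Fin d → ℕ)) : Set (Fin d → ℕ) :=
  {P | P ∉ S ∧ ∀ s ∈ S, s ≠ 0 → P + s ∈ S}

/-- `S` is quasi-irreducible: for every gap `x`, either `2x` is Frobenius allowable or
`F - x ∈ S` for some Frobenius allowable gap `F`. -/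
def QuasiIrreducible {d : ℕ} (S : Set (Fin d → ℕ)) : Prop :=
  ∀ x, x ∉ S → (x + x ∈ FA S ∨ ∃ F ∈ FA S, ∃ s ∈ S, x + s = F)

/-- `S` is a Frobenius GNS with Frobenius gap `F`: the gap set has `F` as its unique
maximal element under the natural partial order. -/
def IsFrobeniusGNS {d : ℕ} (S : Set (Fin d → ℕ)) (F : Fin d → ℕ) : Prop :=
  IsGNS S ∧ MaxGap S F ∧ ∀ x, MaxGap S x → x = F

/-- `‖F‖ = ∏ i (F^(i) + 1)`, the number of lattice points in the box `[0, F]`. -/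
def normF {d : ℕ} (F : Fin d → ℕ) : ℕ := ∏ i, (F i + 1)

/-- `N(F)`: the number of Frobenius GNS in `ℕ^d` with Frobenius gap `F`. -/
noncomputable def NF {d : ℕ} (F : Fin d → ℕ) : ℕ :=
  {S : Set (Fin d → ℕ) | IsFrobeniusGNS S F}.ncard

/-- The set `T(S) = {x ∈ ℕ^d ∣ F - x ∈ (ℤ^d \ S) ∪ {0}}`, where the difference is
taken in `ℤ^d` and `S` is regarded as a subset of `ℤ^d`. -/
def TSet {d : ℕ} (S : Set (Fin d → ℕ)) (F : Fin d → ℕ) : Set (Fin d → ℕ) :=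
  {x | (fun i => (F i : ℤ) - (x i : ℤ)) ∈
      ((fun (s : Fin d → ℕ) => (fun i => (s i : ℤ))) '' S)ᶜ ∪ {0}}

section AS

variable {d : ℕ} {S : Set (Fin d → ℕ)} {F : Fin d → ℕ}

private lemma eq_of_le_of_sum_le' {v w : Fin d → ℕ} (h : v ≤ w)
    (hs : ∑ i, w i ≤ ∑ i, v i) : v = w := by
  by_contra hne
  have hj : ∃ j, v j < w j := by
    by_contra hno
    push_neg at hno
    exact hne (funext fun i => le_antisymm (h i) (hno i))
  obtain ⟨j, hj⟩ := hj
  have : ∑ i, v i < ∑ i, w i :=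
    Finset.sum_lt_sum (fun i _ => h i) ⟨j, Finset.mem_univ j, hj⟩
  omega

private lemma gap_le_frob (h : IsFrobeniusGNS S F) {x : Fin d → ℕ} (hx : x ∉ S) :
    x ≤ F := by
  obtain ⟨⟨h0, hadd, hfin⟩, hmax, huniq⟩ := h
  have hfin' : {y | y ∉ S ∧ x ≤ y}.Finite := hfin.subset (fun y hy => hy.1)
  obtain ⟨m, hm, hmm⟩ : ∃ m ∈ {y | y ∉ S ∧ x ≤ y}, ∀ z ∈ {y | y ∉ S ∧ x ≤ y},
      (∑ i, m i) ≤ ∑ i, z i → (∑ i, m i) = ∑ i, z i := by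
    obtain ⟨m, hm, hmm⟩ := hfin'.exists_maximalFor (fun v => ∑ i, v i) _ ⟨x, hx, le_refl x⟩
    exact ⟨m, hm, fun z hz hle => le_antisymm hle (hmm hz hle)⟩
  have hMax : MaxGap S m := by
    refine ⟨hm.1, fun z hz hle => ?_⟩
    have hz' : z ∈ {y | y ∉ S ∧ x ≤ y} := ⟨hz, hm.2.trans hle⟩
    have hsum := hmm z hz' (Finset.sum_le_sum fun i _ => hle i)
    exact (eq_of_le_of_sum_le' hle (le_of_eq hsum.symm)).symm
  exact (huniq m hMax) ▸ hm.2

private lemma mem_TSet_iff {x : Fin d → ℕ} :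
    x ∈ TSet S F ↔ ¬ x ≤ F ∨ x = F ∨ F - x ∉ S := by
  constructor
  · intro hx
    rcases hx with hx | hx
    · by_cases hle : x ≤ F
      · refine Or.inr (Or.inr ?_)
        intro hFS
        refine hx ⟨F - x, hFS, ?_⟩
        funext i
        have h2 : x i ≤ F i := hle i
        simp only [Pi.sub_apply]
        omega
      · exact Or.inl hle
    · refine Or.inr (Or.inl ?_)
      have h0 : (fun i => (F i : ℤ) - (x i : ℤ)) = (0 : Fin d → ℤ) := hx
      funext i
      have := congrFun h0 i
      simp only [Pi.zero_apply] at this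
      omega
  · intro hx
    rcases hx with hle | he | hns
    · refine Or.inl ?_
      rintro ⟨s, hs, he⟩
      rw [Pi.le_def] at hle
      push_neg at hle
      obtain ⟨i, hi⟩ := hle
      have h3 := congrFun he i
      simp only at h3
      omega
    · subst he
      refine Or.inr ?_
      show (fun i => (x i : ℤ) - (x i : ℤ)) = (0 : Fin d → ℤ)
      funext i; simp
    · refine Or.inl ?_
      rintro ⟨s, hs, he⟩
      have hkey : s = F - x := by
        funext i
        have := congrFun he i
        simp only [Pi.sub_apply] at this ⊢
        omega
      rw [hkey] at hs
      exact hns hs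

private lemma S_sub_TSet (h : IsFrobeniusGNS S F) : S ⊆ TSet S F := by
  intro s hs
  rw [mem_TSet_iff]
  by_cases hle : s ≤ F
  · refine Or.inr (Or.inr ?_)
    intro hFs
    have : F - s + s = F := by
      funext i
      have h2 : s i ≤ F i := hle i
      simp only [Pi.add_apply, Pi.sub_apply]
      omega
    exact h.2.1.1 (this ▸ h.1.2.1 _ hFs _ hs)
  · exact Or.inl hle

private lemma mem_diff_iff (h : IsFrobeniusGNS S F) {x : Fin d → ℕ} :
    x ∈ TSet S F \ S ↔ x ∉ S ∧ (x = F ∨ F - x ∉ S) := by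
  constructor
  · rintro ⟨hT, hS⟩
    refine ⟨hS, ?_⟩
    rcases mem_TSet_iff.mp hT with hle | he | hns
    · exact absurd (gap_le_frob h hS) hle
    · exact Or.inl he
    · exact Or.inr hns
  · rintro ⟨hS, hd⟩
    refine ⟨mem_TSet_iff.mpr ?_, hS⟩
    rcases hd with he | hns
    · exact Or.inr (Or.inl he)
    · exact Or.inr (Or.inr hns)

private lemma PF_sub_diff (h : IsFrobeniusGNS S F) : PF S ⊆ TSet S F \ S := by
  intro P hP
  rw [mem_diff_iff h]
  refine ⟨hP.1, ?_⟩
  by_cases hPF : P = F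
  · exact Or.inl hPF
  · refine Or.inr ?_
    intro hFP
    have hle : P ≤ F := gap_le_frob h hP.1
    have hne : F - P ≠ 0 := by
      intro h0
      refine hPF (funext fun i => ?_)
      have h1 := congrFun h0 i
      have h2 : P i ≤ F i := hle i
      simp only [Pi.sub_apply, Pi.zero_apply] at h1
      omega
    have : P + (F - P) = F := by
      funext i
      have h2 : P i ≤ F i := hle i
      simp only [Pi.add_apply, Pi.sub_apply]
      omega
    exact h.2.1.1 (this ▸ hP.2 _ hFP hne)

end AS
section AS2

variable {d : ℕ} {S : Set (Fin d → ℕ)} {F : Fin d → ℕ}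

private lemma zero_mem_TSet (h : IsFrobeniusGNS S F) : (0 : Fin d → ℕ) ∈ TSet S F := by
  rw [mem_TSet_iff]
  refine Or.inr (Or.inr ?_)
  have : F - (0 : Fin d → ℕ) = F := by funext i; simp
  rw [this]
  exact h.2.1.1

private lemma TSet_compl_finite (h : IsFrobeniusGNS S F) : (TSet S F)ᶜ.Finite := by
  refine (Set.finite_Iic F).subset ?_
  intro x hx
  rw [Set.mem_compl_iff, mem_TSet_iff] at hx
  push_neg at hx
  exact hx.1

private lemma isGNS_of_eq (h : IsFrobeniusGNS S F) (heq : PF S = TSet S F \ S) :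
    IsGNS (TSet S F) := by
  refine ⟨zero_mem_TSet h, ?_, TSet_compl_finite h⟩
  have hPF : ∀ x ∈ TSet S F, x ∉ S → x ∈ PF S := by
    intro x hx hxs
    rw [heq]; exact ⟨hx, hxs⟩
  intro a ha b hb
  by_cases has : a ∈ S
  · by_cases hbs : b ∈ S
    · exact S_sub_TSet h (h.1.2.1 _ has _ hbs)
    · by_cases ha0 : a = 0
      · subst ha0; simpa using hb
      · have := (hPF b hb hbs).2 a has ha0
        have hcomm : a + b = b + a := add_comm a b
        rw [hcomm]
        exact S_sub_TSet h this
  · by_cases hbs : b ∈ S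
    · by_cases hb0 : b = 0
      · subst hb0; simpa using ha
      · exact S_sub_TSet h ((hPF a ha has).2 b hbs hb0)
    · -- both gaps, both PF
      have hPa := hPF a ha has
      have hPb := hPF b hb hbs
      rw [mem_TSet_iff]
      by_cases hle : a + b ≤ F
      · by_cases heF : a + b = F
        · exact Or.inr (Or.inl heF)
        · refine Or.inr (Or.inr ?_)
          intro hFS
          have hs0 : F - (a + b) ≠ 0 := by
            intro h0
            refine heF (funext fun i => ?_)
            have h1 := congrFun h0 i
            have h2 : (a + b) i ≤ F i := hle i
            simp only [Pi.sub_apply, Pi.add_apply, Pi.zero_apply] at h1 h2 ⊢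
            omega
          have hbG : b + (F - (a + b)) ∈ S := hPb.2 _ hFS hs0
          have hbG0 : b + (F - (a + b)) ≠ 0 := by
            intro h0
            have hb0 : b = 0 := by
              funext i
              have h1 := congrFun h0 i
              simp only [Pi.add_apply, Pi.sub_apply, Pi.zero_apply] at h1 ⊢
              omega
            rw [hb0] at hbs
            exact hbs h.1.1
          have := hPa.2 _ hbG hbG0
          have hEq : a + (b + (F - (a + b))) = F := by
            funext i
            have h2 : (a + b) i ≤ F i := hle i
            simp only [Pi.add_apply, Pi.sub_apply] at h2 ⊢
            omega
          exact h.2.1.1 (hEq ▸ this)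
      · exact Or.inl hle

private lemma diff_sub_PF (h : IsFrobeniusGNS S F) (hT : IsGNS (TSet S F)) :
    TSet S F \ S ⊆ PF S := by
  rintro x ⟨hxT, hxS⟩
  refine ⟨hxS, fun s hs hs0 => ?_⟩
  by_contra hxs
  -- x + s is a gap
  have hle : x + s ≤ F := gap_le_frob h hxs
  have hsle : ∀ i, s i ≤ F i := by
    intro i
    have h2 : (x + s) i ≤ F i := hle i
    simp only [Pi.add_apply] at h2
    omega
  -- z1 = F - (x + s) ∈ T
  have hz1 : F - (x + s) ∈ TSet S F := by
    rw [mem_TSet_iff]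
    refine Or.inr (Or.inr ?_)
    have : F - (F - (x + s)) = x + s := by
      funext i
      have h2 : (x + s) i ≤ F i := hle i
      simp only [Pi.sub_apply, Pi.add_apply] at h2 ⊢
      omega
    rw [this]; exact hxs
  have hsum : x + (F - (x + s)) ∈ TSet S F := hT.2.1 _ hxT _ hz1
  have hEq : x + (F - (x + s)) = F - s := by
    funext i
    have h2 : (x + s) i ≤ F i := hle i
    simp only [Pi.add_apply, Pi.sub_apply] at h2 ⊢
    omega
  rw [hEq, mem_TSet_iff] at hsum
  rcases hsum with hc | hc | hc
  · refine hc ?_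
    intro i
    simp only [Pi.sub_apply]
    omega
  · refine hs0 (funext fun i => ?_)
    have h1 := congrFun hc i
    have h2 := hsle i
    simp only [Pi.sub_apply, Pi.zero_apply] at h1 ⊢
    omega
  · refine hc ?_
    have : F - (F - s) = s := by
      funext i
      have h2 := hsle i
      simp only [Pi.sub_apply]
      omega
    rw [this]; exact hs

end AS2
section AS3

variable {d : ℕ} {S : Set (Fin d → ℕ)} {F : Fin d → ℕ}

private lemma count_diff (h : IsFrobeniusGNS S F) :
    (TSet S F \ S).ncard + normF F = 2 * Sᶜ.ncard + 1 := by
  classical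
  have hfin : Sᶜ.Finite := h.1.2.2
  set G : Finset (Fin d → ℕ) := hfin.toFinset with hG
  have hGmem : ∀ x, x ∈ G ↔ x ∉ S := by
    intro x; rw [hG, Set.Finite.mem_toFinset, Set.mem_compl_iff]
  have hgenus : Sᶜ.ncard = G.card := Set.ncard_eq_toFinset_card _ hfin
  have hboxcard : (Finset.Iic F).card = normF F := by
    rw [Pi.card_Iic]
    simp [normF, Nat.card_Iic]
  -- box splits into semigroup elements and gaps
  have hsplit : ((Finset.Iic F).filter (fun x => x ∈ S)).card
      + ((Finset.Iic F).filter (fun x => ¬ x ∈ S)).card = (Finset.Iic F).card :=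
    Finset.card_filter_add_card_filter_not _
  have hGeq : (Finset.Iic F).filter (fun x => ¬ x ∈ S) = G := by
    ext x
    simp only [Finset.mem_filter, Finset.mem_Iic, hGmem]
    exact ⟨fun h1 => h1.2, fun h1 => ⟨gap_le_frob h h1, h1⟩⟩
  -- gaps split according to whether F - x ∈ S
  have hsplit2 : (G.filter (fun x => F - x ∈ S)).card
      + (G.filter (fun x => ¬ F - x ∈ S)).card = G.card :=
    Finset.card_filter_add_card_filter_not _
  -- bijection between gaps with F - x ∈ S and semigroup elements in the box
  have hbij : (G.filter (fun x => F - x ∈ S)).card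
      = ((Finset.Iic F).filter (fun x => x ∈ S)).card := by
    refine Finset.card_bij' (fun x _ => F - x) (fun y _ => F - y) ?_ ?_ ?_ ?_
    · intro x hx
      rw [Finset.mem_filter] at hx ⊢
      refine ⟨Finset.mem_Iic.mpr (fun i => Nat.sub_le _ _), hx.2⟩
    · intro y hy
      rw [Finset.mem_filter] at hy ⊢
      have hyle : y ≤ F := Finset.mem_Iic.mp hy.1
      have hFy : F - y ∉ S := by
        intro hc
        have hE : F - y + y = F := by
          funext i
          have h2 : y i ≤ F i := hyle i
          simp only [Pi.add_apply, Pi.sub_apply]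
          omega
        exact h.2.1.1 (hE ▸ h.1.2.1 _ hc _ hy.2)
      have hE2 : F - (F - y) = y := by
        funext i
        have h2 : y i ≤ F i := hyle i
        simp only [Pi.sub_apply]
        omega
      rw [(hGmem _).symm] at hFy
      refine ⟨hFy, ?_⟩
      rw [hE2]
      exact hy.2
    · intro x hx
      rw [Finset.mem_filter] at hx
      have hxle : x ≤ F := gap_le_frob h ((hGmem x).mp hx.1)
      funext i
      have h2 : x i ≤ F i := hxle i
      simp only [Pi.sub_apply]
      omega
    · intro y hy
      rw [Finset.mem_filter] at hy
      have hyle : y ≤ F := Finset.mem_Iic.mp hy.1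
      funext i
      have h2 : y i ≤ F i := hyle i
      simp only [Pi.sub_apply]
      omega
  rw [hGeq] at hsplit
  -- the set T \ S as a finset
  set D : Finset (Fin d → ℕ) := G.filter (fun x => x = F ∨ ¬ F - x ∈ S) with hD
  have hDset : TSet S F \ S = ↑D := by
    ext x
    rw [mem_diff_iff h, hD]
    simp only [Finset.coe_filter, Set.mem_setOf_eq, hGmem]
  have hDcard : (TSet S F \ S).ncard = D.card := by
    rw [hDset, Set.ncard_coe_finset]
  have hDins : D = insert F (G.filter (fun x => ¬ F - x ∈ S)) := by
    ext x
    rw [hD, Finset.mem_insert]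
    simp only [Finset.mem_filter, hGmem]
    constructor
    · rintro ⟨hx, hF | hn⟩
      · exact Or.inl hF
      · exact Or.inr ⟨hx, hn⟩
    · rintro (rfl | ⟨hx, hn⟩)
      · exact ⟨h.2.1.1, Or.inl rfl⟩
      · exact ⟨hx, Or.inr hn⟩
  have hFnot : F ∉ G.filter (fun x => ¬ F - x ∈ S) := by
    rw [Finset.mem_filter]
    rintro ⟨-, hn⟩
    refine hn ?_
    have : F - F = (0 : Fin d → ℕ) := by funext i; simp
    rw [this]
    exact h.1.1
  have hDcard2 : D.card = (G.filter (fun x => ¬ F - x ∈ S)).card + 1 := by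
    rw [hDins, Finset.card_insert_of_notMem hFnot]
  omega

end AS3
/-- A Frobenius GNS `S` with Frobenius gap `F` is almost symmetric, i.e.
`t(S) = 2g(S) + 1 - ‖F‖`, iff `T(S)` is a GNS. -/
theorem almostSymmetric_iff_TSet_isGNS {d : ℕ} (S : Set (Fin d → ℕ)) (F : Fin d → ℕ)
    (h : IsFrobeniusGNS S F) :
    (((PF S).ncard : ℤ) = 2 * (Sᶜ.ncard : ℤ) + 1 - (normF F : ℤ)) ↔
      IsGNS (TSet S F) := by
  have hfin : Sᶜ.Finite := h.1.2.2
  have hDfin : (TSet S F \ S).Finite := hfin.subset (fun x hx => hx.2)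
  have hcount : ((TSet S F \ S).ncard : ℤ) + (normF F : ℤ)
      = 2 * (Sᶜ.ncard : ℤ) + 1 := by exact_mod_cast count_diff h
  constructor
  · intro hLHS
    have hcard : (TSet S F \ S).ncard ≤ (PF S).ncard := by omega
    exact isGNS_of_eq h (Set.eq_of_subset_of_ncard_le (PF_sub_diff h) hcard hDfin)
  · intro hGNS
    have heq : PF S = TSet S F \ S :=
      Set.Subset.antisymm (PF_sub_diff h) (diff_sub_PF h hGNS)
    rw [heq]
    omega
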